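/- arXiv:2401.12917 — 4 statements merged into one kernel-verified Lean document; each statement's English description precedes it below -/
import Mathlib

section
/- Let S, O, A be nonempty finite types, f : S → O and g : S → A functions, and p : S × O × A → ℝ a probability mass function such that p(s,o,a) = 0 whenever o ≠ f(s) or a ≠ g(s). Fix a ∈ A with p_A(a) := ∑_{s,o} p(s,o,a) > 0. Then −log p_A(a) = ∑_{s,o} p(s,o ∣ a) · ( log p(s ∣ a) − log p_{SO}(s,o) ), where p(s,o ∣ a) := p(s,o,a)/p_A(a), p(s ∣ a) := (∑_{o'} p(s,o',a))/p_A(a), p_{SO}(s,o) := ∑_{a'} p(s,o,a') is the joint marginal of (s,o), and summands with p(s,o ∣ a) = 0 are taken to be 0. -/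
/-- expected free energy identity: under the precise-agent
assumption, the negative log marginal probability of a decision `a` equals the
expectation under the prediction `p(s,o ∣ a)` of `log p(s ∣ a) − log p(s,o)`.
Summands vanish where `p(s,o ∣ a) = 0` since they carry that factor. -/
theorem stmt4 (S O A : Type*) [Fintype S] [Fintype O] [Fintype A]
    [Nonempty S] [Nonempty O] [Nonempty A]
    (f : S → O) (g : S → A)
    (p : S × O × A → ℝ) (hp : ∀ x, 0 ≤ p x) (hsum : ∑ x, p x = 1)
    (hdet : ∀ s o a, o ≠ f s ∨ a ≠ g s → p (s, o, a) = 0)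
    (a : A) (hpa : 0 < ∑ s, ∑ o, p (s, o, a)) :
    -Real.log (∑ s, ∑ o, p (s, o, a)) =
      ∑ s, ∑ o, (p (s, o, a) / (∑ s', ∑ o', p (s', o', a))) *
        (Real.log ((∑ o', p (s, o', a)) / (∑ s', ∑ o', p (s', o', a))) -
          Real.log (∑ a', p (s, o, a'))) := by
  set P := ∑ s, ∑ o, p (s, o, a) with hP
  have hPne : P ≠ 0 := ne_of_gt hpa
  have key : ∀ s o, (p (s, o, a) / P) *
      (Real.log ((∑ o', p (s, o', a)) / P) - Real.log (∑ a', p (s, o, a')))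
      = (p (s, o, a) / P) * (-Real.log P) := by
    intro s o
    rcases eq_or_ne (p (s, o, a)) 0 with h0 | h0
    · simp [h0]
    · have ho : o = f s := by
        by_contra h; exact h0 (hdet s o a (Or.inl h))
      have ha : a = g s := by
        by_contra h; exact h0 (hdet s o a (Or.inr h))
      have hpos : 0 < p (s, o, a) := lt_of_le_of_ne (hp _) (Ne.symm h0)
      have h1 : (∑ o', p (s, o', a)) = p (s, o, a) := by
        refine Finset.sum_eq_single o (fun o' _ hne => ?_) (by simp)
        exact hdet s o' a (Or.inl (ho ▸ hne))
      have h2 : (∑ a', p (s, o, a')) = p (s, o, a) := by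
        refine Finset.sum_eq_single a (fun a' _ hne => ?_) (by simp)
        exact hdet s o a' (Or.inr (ha ▸ hne))
      rw [h1, h2, Real.log_div h0 hPne]
      ring
  calc -Real.log P
      = ((∑ s, ∑ o, p (s, o, a)) / P) * (-Real.log P) := by
        rw [← hP, div_self hPne, one_mul]
    _ = ∑ s, ∑ o, (p (s, o, a) / P) * (-Real.log P) := by
        rw [Finset.sum_div, Finset.sum_mul]
        exact Finset.sum_congr rfl fun s _ => by rw [Finset.sum_div, Finset.sum_mul]
    _ = _ := by
        exact Finset.sum_congr rfl fun s _ => Finset.sum_congr rfl fun o _ => (key s o).symm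
end

section
/- Let S, O, A be nonempty finite types, f : S → O and g : S → A functions, and p : S × O × A → ℝ a probability mass function such that p(s,o,a) = 0 whenever o ≠ f(s) or a ≠ g(s). Fix a ∈ A with p_A(a) := ∑_{s,o} p(s,o,a) > 0. Then −log p_A(a) = D_{KL}( p(· ∣ a) ∥ p_S ) + ∑_{s} p(s ∣ a) · H( p(· ∣ s) ), where p(s ∣ a) := (∑_{o} p(s,o,a))/p_A(a) is the predicted state distribution, p_S(s) := ∑_{o,a'} p(s,o,a') is the marginal state distribution, p(o ∣ s) := (∑_{a'} p(s,o,a'))/p_S(s) is the conditional observation distribution (defined when p_S(s) > 0), D_{KL}(q ∥ r) := ∑_{s} q(s) log( q(s)/r(s) ) with summands 0 when q(s) = 0, and H(q) := −∑_{o} q(o) log q(o) with summands 0 when q(o) = 0. -/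
/-- risk–ambiguity decomposition: under the precise-agent
assumption, `−log p_A(a)` equals the KL divergence between the predicted state
distribution `p(· ∣ a)` and the marginal state distribution `p_S` (the risk),
plus the expected entropy of observations given states (the ambiguity).
Summands of the KL divergence and of the entropy vanish where the corresponding
probability vanishes, since they carry that probability as a factor. -/
theorem stmt5 (S O A : Type*) [Fintype S] [Fintype O] [Fintype A]
    [Nonempty S] [Nonempty O] [Nonempty A]
    (f : S → O) (g : S → A)
    (p : S × O × A → ℝ) (hp : ∀ x, 0 ≤ p x) (hsum : ∑ x, p x = 1)
    (hdet : ∀ s o a, o ≠ f s ∨ a ≠ g s → p (s, o, a) = 0)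
    (a : A) (hpa : 0 < ∑ s, ∑ o, p (s, o, a)) :
    -Real.log (∑ s, ∑ o, p (s, o, a)) =
      (∑ s, ((∑ o, p (s, o, a)) / (∑ s', ∑ o', p (s', o', a))) *
          Real.log (((∑ o, p (s, o, a)) / (∑ s', ∑ o', p (s', o', a))) /
            (∑ o, ∑ a', p (s, o, a')))) +
      ∑ s, ((∑ o, p (s, o, a)) / (∑ s', ∑ o', p (s', o', a))) *
        (-∑ o, ((∑ a', p (s, o, a')) / (∑ o', ∑ a', p (s, o', a'))) *
            Real.log ((∑ a', p (s, o, a')) / (∑ o', ∑ a', p (s, o', a')))) := by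
  classical
  set pa := ∑ s, ∑ o, p (s, o, a) with hpa_def
  have hpane : pa ≠ 0 := ne_of_gt hpa
  have hrow : ∀ (s : S) (b : A), ∑ o, p (s, o, b) = p (s, f s, b) := by
    intro s b
    rw [Finset.sum_eq_single (f s)]
    · intro o _ ho; exact hdet s o b (Or.inl ho)
    · intro h; exact absurd (Finset.mem_univ _) h
  have hcol : ∀ (s : S) (o : O), ∑ a', p (s, o, a')
      = if o = f s then p (s, f s, g s) else 0 := by
    intro s o
    by_cases ho : o = f s
    · subst ho
      rw [Finset.sum_eq_single (g s) (fun b _ hb => hdet s (f s) b (Or.inr hb))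
        (fun h => absurd (Finset.mem_univ _) h)]
      simp
    · simp only [if_neg ho]
      exact Finset.sum_eq_zero fun b _ => hdet s o b (Or.inl ho)
  have hM : ∀ s : S, ∑ o, ∑ a', p (s, o, a') = p (s, f s, g s) := by
    intro s; simp [hcol]
  -- ambiguity vanishes
  have hent : ∀ s : S, (∑ o, ((∑ a', p (s, o, a')) / (∑ o', ∑ a', p (s, o', a'))) *
      Real.log ((∑ a', p (s, o, a')) / (∑ o', ∑ a', p (s, o', a')))) = 0 := by
    intro s
    apply Finset.sum_eq_zero
    intro o _
    rw [hcol, hM]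
    rcases eq_or_ne o (f s) with ho | ho
    · simp only [if_pos ho]
      rcases eq_or_ne (p (s, f s, g s)) 0 with h | h
      · simp [h]
      · rw [div_self h]; simp
    · simp [if_neg ho]
  have hkey : ∀ s : S, ((∑ o, p (s, o, a)) / pa) *
      Real.log (((∑ o, p (s, o, a)) / pa) / (∑ o, ∑ a', p (s, o, a')))
      = ((∑ o, p (s, o, a)) / pa) * (-Real.log pa) := by
    intro s
    rw [hrow s a, hM]
    rcases eq_or_ne (p (s, f s, a)) 0 with h | h
    · simp [h]
    · have hag : a = g s := by
        by_contra hne; exact h (hdet s (f s) a (Or.inr hne))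
      rw [← hag]
      have : p (s, f s, a) / pa / p (s, f s, a) = 1 / pa := by
        field_simp
      rw [this, one_div, Real.log_inv]
  calc -Real.log pa
      = (∑ s, ((∑ o, p (s, o, a)) / pa) * (-Real.log pa)) + ∑ s : S, ((∑ o, p (s, o, a)) / pa) * (-(0:ℝ)) := by
        rw [← Finset.sum_mul, ← Finset.sum_div]
        simp [div_self hpane]
        rw [← hpa_def, div_self hpane, one_mul]
    _ = _ := by
        congr 1
        · exact (Finset.sum_congr rfl fun s _ => (hkey s)).symm
        · exact Finset.sum_congr rfl fun s _ => by rw [hent s]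
end

section
/- Let S, O, A be nonempty finite types, f : S → O and g : S → A functions, and p : S × O × A → ℝ a probability mass function such that p(s,o,a) = 0 whenever o ≠ f(s) or a ≠ g(s). Fix a ∈ A with p_A(a) := ∑_{s,o} p(s,o,a) > 0, and assume that the marginal p_O(o) := ∑_{s,a'} p(s,o,a') is positive for every o with p(o ∣ a) := (∑_{s} p(s,o,a))/p_A(a) > 0. Then −log p_A(a) = −∑_{o} p(o ∣ a) log p_O(o) − ∑_{o} p(o ∣ a) · D_{KL}( p(· ∣ o, a) ∥ p(· ∣ a) ) + ∑_{o} p(o ∣ a) · D_{KL}( p(· ∣ o, a) ∥ p(· ∣ o) ), where p(s ∣ o, a) := p(s,o,a)/∑_{s'} p(s',o,a), p(s ∣ a) := (∑_{o'} p(s,o',a))/p_A(a), p(s ∣ o) := (∑_{a'} p(s,o,a'))/p_O(o), D_{KL}(q ∥ r) := ∑_{s} q(s) log( q(s)/r(s) ) with summands 0 when q(s) = 0, and each outer summand is 0 when p(o ∣ a) = 0. -/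
/-- three-term decomposition of expected free energy: under the
precise-agent assumption, and provided the observation marginal `p_O(o)` is
positive whenever `p(o ∣ a) > 0`, `−log p_A(a)` equals negative extrinsic value
minus intrinsic value plus a residual expected KL divergence between the
posteriors `p(· ∣ o, a)` and `p(· ∣ o)`.  All summands vanish where the
probability weighting them vanishes, since they carry it as a factor. -/
theorem stmt6 (S O A : Type*) [Fintype S] [Fintype O] [Fintype A]
    [Nonempty S] [Nonempty O] [Nonempty A]
    (f : S → O) (g : S → A)
    (p : S × O × A → ℝ) (hp : ∀ x, 0 ≤ p x) (hsum : ∑ x, p x = 1)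
    (hdet : ∀ s o a, o ≠ f s ∨ a ≠ g s → p (s, o, a) = 0)
    (a : A) (hpa : 0 < ∑ s, ∑ o, p (s, o, a))
    (hO : ∀ o : O, 0 < (∑ s, p (s, o, a)) / (∑ s', ∑ o', p (s', o', a)) →
      0 < ∑ s, ∑ a', p (s, o, a')) :
    -Real.log (∑ s, ∑ o, p (s, o, a)) =
      -(∑ o, ((∑ s, p (s, o, a)) / (∑ s', ∑ o', p (s', o', a))) *
          Real.log (∑ s, ∑ a', p (s, o, a')))
      - (∑ o, ((∑ s, p (s, o, a)) / (∑ s', ∑ o', p (s', o', a))) *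
          (∑ s, (p (s, o, a) / (∑ s', p (s', o, a))) *
            Real.log ((p (s, o, a) / (∑ s', p (s', o, a))) /
              ((∑ o', p (s, o', a)) / (∑ s', ∑ o', p (s', o', a))))))
      + ∑ o, ((∑ s, p (s, o, a)) / (∑ s', ∑ o', p (s', o', a))) *
          (∑ s, (p (s, o, a) / (∑ s', p (s', o, a))) *
            Real.log ((p (s, o, a) / (∑ s', p (s', o, a))) /
              ((∑ a', p (s, o, a')) / (∑ s', ∑ a', p (s', o, a'))))) := by
  classical
  set PA := ∑ s, ∑ o, p (s, o, a) with hPAdef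
  have hterm : ∀ o : O,
      -(((∑ s, p (s, o, a)) / PA) * Real.log (∑ s, ∑ a', p (s, o, a')))
      - ((∑ s, p (s, o, a)) / PA) *
          (∑ s, (p (s, o, a) / (∑ s', p (s', o, a))) *
            Real.log ((p (s, o, a) / (∑ s', p (s', o, a))) /
              ((∑ o', p (s, o', a)) / PA)))
      + ((∑ s, p (s, o, a)) / PA) *
          (∑ s, (p (s, o, a) / (∑ s', p (s', o, a))) *
            Real.log ((p (s, o, a) / (∑ s', p (s', o, a))) /
              ((∑ a', p (s, o, a')) / (∑ s', ∑ a', p (s', o, a')))))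
      = ((∑ s, p (s, o, a)) / PA) * (-Real.log PA) := by
    intro o
    by_cases h0 : (∑ s, p (s, o, a)) = 0
    · simp [h0]
    have hSa : 0 < ∑ s, p (s, o, a) :=
      lt_of_le_of_ne (Finset.sum_nonneg fun s _ => hp _) (Ne.symm h0)
    have hw : 0 < (∑ s, p (s, o, a)) / PA := div_pos hSa hpa
    have hpO : 0 < ∑ s, ∑ a', p (s, o, a') := hO o hw
    have inner : ∀ s ∈ Finset.univ,
        (p (s, o, a) / (∑ s', p (s', o, a))) *
            Real.log ((p (s, o, a) / (∑ s', p (s', o, a))) /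
              ((∑ a', p (s, o, a')) / (∑ s', ∑ a', p (s', o, a'))))
        - (p (s, o, a) / (∑ s', p (s', o, a))) *
            Real.log ((p (s, o, a) / (∑ s', p (s', o, a))) /
              ((∑ o', p (s, o', a)) / PA))
        = (p (s, o, a) / (∑ s', p (s', o, a))) *
            (Real.log (∑ s, ∑ a', p (s, o, a')) - Real.log PA) := by
      intro s _
      by_cases hps : p (s, o, a) = 0
      · simp [hps]
      have hps' : 0 < p (s, o, a) := lt_of_le_of_ne (hp _) (Ne.symm hps)
      have hfa : o = f s ∧ a = g s := by
        by_contra h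
        exact hps (hdet s o a (by tauto))
      have hso : (∑ o', p (s, o', a)) = p (s, o, a) := by
        apply Finset.sum_eq_single_of_mem o (Finset.mem_univ o)
        intro o' _ hne
        exact hdet s o' a (Or.inl fun h => hne (h.trans hfa.1.symm))
      have hsa : (∑ a', p (s, o, a')) = p (s, o, a) := by
        apply Finset.sum_eq_single_of_mem a (Finset.mem_univ a)
        intro a' _ hne
        exact hdet s o a' (Or.inr fun h => hne (h.trans hfa.2.symm))
      rw [hso, hsa]
      have hq : p (s, o, a) / (∑ s', p (s', o, a)) ≠ 0 :=
        ne_of_gt (div_pos hps' hSa)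
      rw [Real.log_div hq (ne_of_gt (div_pos hps' hpO)),
          Real.log_div hq (ne_of_gt (div_pos hps' hpa)),
          Real.log_div (ne_of_gt hps') (ne_of_gt hpO),
          Real.log_div (ne_of_gt hps') (ne_of_gt hpa)]
      ring
    have hKL :
        (∑ s, (p (s, o, a) / (∑ s', p (s', o, a))) *
            Real.log ((p (s, o, a) / (∑ s', p (s', o, a))) /
              ((∑ a', p (s, o, a')) / (∑ s', ∑ a', p (s', o, a')))))
        - (∑ s, (p (s, o, a) / (∑ s', p (s', o, a))) *
            Real.log ((p (s, o, a) / (∑ s', p (s', o, a))) /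
              ((∑ o', p (s, o', a)) / PA)))
        = Real.log (∑ s, ∑ a', p (s, o, a')) - Real.log PA := by
      rw [← Finset.sum_sub_distrib, Finset.sum_congr rfl inner, ← Finset.sum_mul,
        ← Finset.sum_div, div_self (ne_of_gt hSa), one_mul]
    linear_combination ((∑ s, p (s, o, a)) / PA) * hKL
  calc -Real.log PA
      = (∑ o, (∑ s, p (s, o, a)) / PA) * (-Real.log PA) := by
        rw [← Finset.sum_div, Finset.sum_comm, div_self (ne_of_gt hpa), one_mul]
    _ = ∑ o, ((∑ s, p (s, o, a)) / PA) * (-Real.log PA) := Finset.sum_mul ..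
    _ = ∑ o, (-(((∑ s, p (s, o, a)) / PA) * Real.log (∑ s, ∑ a', p (s, o, a')))
          - ((∑ s, p (s, o, a)) / PA) *
              (∑ s, (p (s, o, a) / (∑ s', p (s', o, a))) *
                Real.log ((p (s, o, a) / (∑ s', p (s', o, a))) /
                  ((∑ o', p (s, o', a)) / PA)))
          + ((∑ s, p (s, o, a)) / PA) *
              (∑ s, (p (s, o, a) / (∑ s', p (s', o, a))) *
                Real.log ((p (s, o, a) / (∑ s', p (s', o, a))) /
                  ((∑ a', p (s, o, a')) / (∑ s', ∑ a', p (s', o, a')))))) :=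
        Finset.sum_congr rfl fun o _ => (hterm o).symm
    _ = _ := by
        rw [Finset.sum_add_distrib, Finset.sum_sub_distrib, Finset.sum_neg_distrib]
end

section
/- Let S, O, A be nonempty finite types, f : S → O and g : S → A functions, and p : S × O × A → ℝ a probability mass function such that p(s,o,a) = 0 whenever o ≠ f(s) or a ≠ g(s). Fix a ∈ A with p_A(a) := ∑_{s,o} p(s,o,a) > 0, and assume that the marginal p_O(o) := ∑_{s,a'} p(s,o,a') is positive for every o with p(o ∣ a) := (∑_{s} p(s,o,a))/p_A(a) > 0. Then −log p_A(a) ≥ −∑_{o} p(o ∣ a) log p_O(o) − ∑_{o} p(o ∣ a) · D_{KL}( p(· ∣ o, a) ∥ p(· ∣ a) ), where p(s ∣ o, a) := p(s,o,a)/∑_{s'} p(s',o,a), p(s ∣ a) := (∑_{o'} p(s,o',a))/p_A(a), D_{KL}(q ∥ r) := ∑_{s} q(s) log( q(s)/r(s) ) with summands 0 when q(s) = 0, and each outer summand is 0 when p(o ∣ a) = 0. -/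
/-- extrinsic/intrinsic value lower bound: under the precise-agent
assumption, and provided the observation marginal `p_O(o)` is positive whenever
`p(o ∣ a) > 0`, `−log p_A(a)` is bounded below by negative extrinsic value minus
intrinsic value (the expected information gain about states).  All summands
vanish where the probability weighting them vanishes, since they carry it as a
factor. -/
theorem stmt7 (S O A : Type*) [Fintype S] [Fintype O] [Fintype A]
    [Nonempty S] [Nonempty O] [Nonempty A]
    (f : S → O) (g : S → A)
    (p : S × O × A → ℝ) (hp : ∀ x, 0 ≤ p x) (hsum : ∑ x, p x = 1)
    (hdet : ∀ s o a, o ≠ f s ∨ a ≠ g s → p (s, o, a) = 0)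
    (a : A) (hpa : 0 < ∑ s, ∑ o, p (s, o, a))
    (hO : ∀ o : O, 0 < (∑ s, p (s, o, a)) / (∑ s', ∑ o', p (s', o', a)) →
      0 < ∑ s, ∑ a', p (s, o, a')) :
    -Real.log (∑ s, ∑ o, p (s, o, a)) ≥
      -(∑ o, ((∑ s, p (s, o, a)) / (∑ s', ∑ o', p (s', o', a))) *
          Real.log (∑ s, ∑ a', p (s, o, a')))
      - ∑ o, ((∑ s, p (s, o, a)) / (∑ s', ∑ o', p (s', o', a))) *
          (∑ s, (p (s, o, a) / (∑ s', p (s', o, a))) *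
            Real.log ((p (s, o, a) / (∑ s', p (s', o, a))) /
              ((∑ o', p (s, o', a)) / (∑ s', ∑ o', p (s', o', a))))) := by
  classical
  have hpane : (∑ s, ∑ o, p (s, o, a)) ≠ 0 := ne_of_gt hpa
  have hn0 : ∀ o : O, 0 ≤ ∑ s, p (s, o, a) :=
    fun o => Finset.sum_nonneg fun s _ => hp _
  have hnsum : (∑ o : O, ∑ s, p (s, o, a)) = ∑ s, ∑ o, p (s, o, a) :=
    Finset.sum_comm
  have hnle : ∀ o : O, (∑ s, p (s, o, a)) ≤ ∑ s, ∑ a', p (s, o, a') := by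
    intro o
    refine Finset.sum_le_sum fun s _ => ?_
    exact Finset.single_le_sum (fun a' _ => hp (s, o, a')) (Finset.mem_univ a)
  -- KL term identity
  have hKL : ∀ o : O,
      (∑ s, (p (s, o, a) / (∑ s', p (s', o, a))) *
        Real.log ((p (s, o, a) / (∑ s', p (s', o, a))) /
          ((∑ o', p (s, o', a)) / (∑ s', ∑ o', p (s', o', a)))))
      * ((∑ s, p (s, o, a)) / (∑ s', ∑ o', p (s', o', a)))
      = ((∑ s, p (s, o, a)) / (∑ s', ∑ o', p (s', o', a))) *
          (Real.log (∑ s', ∑ o', p (s', o', a)) - Real.log (∑ s, p (s, o, a))) := by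
    intro o
    rcases eq_or_lt_of_le (hn0 o) with h0 | hpos
    · rw [← h0]; simp
    · have hno : (∑ s, p (s, o, a)) ≠ 0 := ne_of_gt hpos
      have hterm : ∀ s : S, (p (s, o, a) / (∑ s', p (s', o, a))) *
          Real.log ((p (s, o, a) / (∑ s', p (s', o, a))) /
            ((∑ o', p (s, o', a)) / (∑ s', ∑ o', p (s', o', a))))
          = (p (s, o, a) / (∑ s', p (s', o, a))) *
            (Real.log (∑ s', ∑ o', p (s', o', a)) - Real.log (∑ s, p (s, o, a))) := by
        intro s
        rcases eq_or_lt_of_le (hp (s, o, a)) with hps | hps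
        · rw [← hps]; simp
        · have hpsne : p (s, o, a) ≠ 0 := ne_of_gt hps
          have hofs : o = f s := by
            by_contra h
            exact hpsne (hdet s o a (Or.inl h))
          have hm : (∑ o', p (s, o', a)) = p (s, o, a) := by
            refine Finset.sum_eq_single o (fun o' _ ho' => ?_)
              (fun h => absurd (Finset.mem_univ o) h)
            exact hdet s o' a (Or.inl (hofs ▸ ho'))
          rw [hm]
          congr 1
          have hquot : (p (s, o, a) / (∑ s', p (s', o, a))) /
              (p (s, o, a) / (∑ s', ∑ o', p (s', o', a)))
              = (∑ s', ∑ o', p (s', o', a)) / (∑ s', p (s', o, a)) := by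
            field_simp
          rw [hquot, Real.log_div hpane hno]
      calc (∑ s, (p (s, o, a) / (∑ s', p (s', o, a))) *
            Real.log ((p (s, o, a) / (∑ s', p (s', o, a))) /
              ((∑ o', p (s, o', a)) / (∑ s', ∑ o', p (s', o', a)))))
          * ((∑ s, p (s, o, a)) / (∑ s', ∑ o', p (s', o', a)))
          = (∑ s, (p (s, o, a) / (∑ s', p (s', o, a))) *
              (Real.log (∑ s', ∑ o', p (s', o', a)) - Real.log (∑ s, p (s, o, a))))
            * ((∑ s, p (s, o, a)) / (∑ s', ∑ o', p (s', o', a))) := by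
            rw [Finset.sum_congr rfl fun s _ => hterm s]
        _ = ((∑ s, p (s, o, a)) / (∑ s', p (s', o, a))) *
              (Real.log (∑ s', ∑ o', p (s', o', a)) - Real.log (∑ s, p (s, o, a)))
            * ((∑ s, p (s, o, a)) / (∑ s', ∑ o', p (s', o', a))) := by
            rw [← Finset.sum_mul, ← Finset.sum_div]
        _ = ((∑ s, p (s, o, a)) / (∑ s', ∑ o', p (s', o', a))) *
              (Real.log (∑ s', ∑ o', p (s', o', a)) - Real.log (∑ s, p (s, o, a))) := by
            rw [div_self hno]; ring
  have hqsum : (∑ o : O, (∑ s, p (s, o, a)) / (∑ s', ∑ o', p (s', o', a))) = 1 := by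
    rw [← Finset.sum_div, hnsum, div_self hpane]
  have key : Real.log (∑ s, ∑ o, p (s, o, a)) ≤
      (∑ o, ((∑ s, p (s, o, a)) / (∑ s', ∑ o', p (s', o', a))) *
          Real.log (∑ s, ∑ a', p (s, o, a')))
      + ∑ o, ((∑ s, p (s, o, a)) / (∑ s', ∑ o', p (s', o', a))) *
          (∑ s, (p (s, o, a) / (∑ s', p (s', o, a))) *
            Real.log ((p (s, o, a) / (∑ s', p (s', o, a))) /
              ((∑ o', p (s, o', a)) / (∑ s', ∑ o', p (s', o', a))))) := by
    have hI : (∑ o, ((∑ s, p (s, o, a)) / (∑ s', ∑ o', p (s', o', a))) *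
          (∑ s, (p (s, o, a) / (∑ s', p (s', o, a))) *
            Real.log ((p (s, o, a) / (∑ s', p (s', o, a))) /
              ((∑ o', p (s, o', a)) / (∑ s', ∑ o', p (s', o', a))))))
        = ∑ o, ((∑ s, p (s, o, a)) / (∑ s', ∑ o', p (s', o', a))) *
            (Real.log (∑ s', ∑ o', p (s', o', a)) - Real.log (∑ s, p (s, o, a))) := by
      refine Finset.sum_congr rfl fun o _ => ?_
      rw [mul_comm]; exact hKL o
    rw [hI, ← Finset.sum_add_distrib]
    calc Real.log (∑ s, ∑ o, p (s, o, a))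
        = ∑ o : O, ((∑ s, p (s, o, a)) / (∑ s', ∑ o', p (s', o', a))) *
            Real.log (∑ s, ∑ o, p (s, o, a)) := by
          rw [← Finset.sum_mul, hqsum, one_mul]
      _ ≤ _ := by
          refine Finset.sum_le_sum fun o _ => ?_
          rcases eq_or_lt_of_le (hn0 o) with h0 | hpos
          · rw [← h0]; simp
          · have hq : 0 < (∑ s, p (s, o, a)) / (∑ s', ∑ o', p (s', o', a)) :=
              div_pos hpos hpa
            have hpO := hO o hq
            have hlog : Real.log (∑ s, p (s, o, a)) ≤
                Real.log (∑ s, ∑ a', p (s, o, a')) :=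
              Real.log_le_log hpos (hnle o)
            nlinarith [mul_le_mul_of_nonneg_left hlog (le_of_lt hq)]
  linarith
end
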